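/- arXiv:2306.02056 — 2 statements merged into one kernel-verified Lean document; each statement's English description precedes it below -/
import Mathlib

section
/- Let S be a finite set and let s : S^ℕ → S^ℕ be the left shift, with induced graph metric ρ_s. Then the Borel extended metric space (S^ℕ, ρ_s) has Borel asymptotic dimension at most 1: for every r > 0 there exists a uniformly bounded Borel equivalence relation E on S^ℕ such that every ρ_s-ball of radius r meets at most 2 classes of E. -/
namespace BA

open SimpleGraph

variable {V : Type*}

/-- A geodesic ray in a graph: consecutive vertices are adjacent and the graph
distance between the `m`-th and `n`-th vertices is `|m - n|`. -/
def GeoRay (G : SimpleGraph V) (x : ℕ → V) : Prop :=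
  (∀ n, G.Adj (x n) (x (n + 1))) ∧ ∀ m n, G.dist (x m) (x n) = Nat.dist m n

/-- A finite geodesic path of length `k`, recorded as a function `ℕ → V`
(only the values at indices `≤ k` are relevant). -/
def GeoSeg (G : SimpleGraph V) (p : ℕ → V) (k : ℕ) : Prop :=
  (∀ i < k, G.Adj (p i) (p (i + 1))) ∧
    ∀ i ≤ k, ∀ j ≤ k, G.dist (p i) (p j) = Nat.dist i j

/-- Two sequences of vertices are asymptotic iff their Hausdorff distance is
finite (expressed via walks, so it is meaningful in disconnected graphs). -/
def Asymp (G : SimpleGraph V) (x y : ℕ → V) : Prop :=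
  ∃ K : ℕ, (∀ n, ∃ m, ∃ w : G.Walk (x n) (y m), w.length ≤ K) ∧
    ∀ m, ∃ n, ∃ w : G.Walk (x n) (y m), w.length ≤ K

theorem asymp_refl (G : SimpleGraph V) (x : ℕ → V) : Asymp G x x :=
  ⟨0, fun n => ⟨n, Walk.nil, by simp⟩, fun n => ⟨n, Walk.nil, by simp⟩⟩

theorem asymp_symm {G : SimpleGraph V} {x y : ℕ → V} (h : Asymp G x y) : Asymp G y x := by
  obtain ⟨K, h1, h2⟩ := h
  refine ⟨K, fun n => ?_, fun m => ?_⟩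
  · obtain ⟨m, w, hw⟩ := h2 n
    exact ⟨m, w.reverse, by simpa using hw⟩
  · obtain ⟨n, w, hw⟩ := h1 m
    exact ⟨n, w.reverse, by simpa using hw⟩

theorem asymp_trans {G : SimpleGraph V} {x y z : ℕ → V} (h : Asymp G x y)
    (h' : Asymp G y z) : Asymp G x z := by
  obtain ⟨K1, h1, h2⟩ := h
  obtain ⟨K2, h3, h4⟩ := h'
  refine ⟨K1 + K2, fun n => ?_, fun p => ?_⟩
  · obtain ⟨m, w1, hw1⟩ := h1 n
    obtain ⟨p, w2, hw2⟩ := h3 m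
    exact ⟨p, w1.append w2, by rw [Walk.length_append]; omega⟩
  · obtain ⟨m, w2, hw2⟩ := h4 p
    obtain ⟨n, w1, hw1⟩ := h2 m
    exact ⟨n, w1.append w2, by rw [Walk.length_append]; omega⟩

/-- The setoid of geodesic rays up to asymptoticity; its quotient is the
(Gromov) boundary of the graph. -/
def asympSetoid (G : SimpleGraph V) : Setoid {x : ℕ → V // GeoRay G x} where
  r a b := Asymp G a.1 b.1
  iseqv := ⟨fun a => asymp_refl G a.1, fun h => asymp_symm h, fun h h' => asymp_trans h h'⟩

/-- `δ`-hyperbolicity: every geodesic triangle is `δ`-thin, i.e. each side is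
contained in the `δ`-neighbourhood of the union of the other two sides. -/
def DeltaThin (G : SimpleGraph V) (δ : ℝ) : Prop :=
  ∀ (a b c : ℕ) (p q r : ℕ → V), GeoSeg G p a → GeoSeg G q b → GeoSeg G r c →
    p a = q 0 → p 0 = r 0 → q b = r c → ∀ i ≤ c,
      ∃ j, (j ≤ a ∧ (G.dist (r i) (p j) : ℝ) ≤ δ) ∨
           (j ≤ b ∧ (G.dist (r i) (q j) : ℝ) ≤ δ)

/-- The Cayley graph of a group w.r.t. a (symmetric) set `S`. -/
def cayley {G : Type*} [Group G] (S : Set G) : SimpleGraph G :=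
  SimpleGraph.fromRel fun g h => g⁻¹ * h ∈ S

/-- The type of a path `(x_n)` in a Cayley graph: the sequence `x_n⁻¹ x_{n+1}`. -/
def typ {G : Type*} [Group G] (x : ℕ → G) : ℕ → G := fun n => (x n)⁻¹ * x (n + 1)

/-- Lexicographic order on sequences. -/
def lexLe {α : Type*} [LinearOrder α] (x y : ℕ → α) : Prop :=
  x = y ∨ ∃ n, (∀ m < n, x m = y m) ∧ x n < y n

/-- Lexicographic order on the first `k` entries of sequences. -/
def lexLeUpTo {α : Type*} [LinearOrder α] (k : ℕ) (x y : ℕ → α) : Prop :=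
  (∀ i < k, x i = y i) ∨ ∃ n < k, (∀ m < n, x m = y m) ∧ x n < y n

/-- `g` can be written as a product of at most `r` elements of `S`. -/
def wordLenLe {G : Type*} [Group G] (S : Set G) (g : G) (r : ℝ) : Prop :=
  ∃ l : List G, (∀ s ∈ l, s ∈ S) ∧ l.prod = g ∧ (l.length : ℝ) ≤ r

/-- The left shift on sequences. -/
def shift {α : Type*} (x : ℕ → α) : ℕ → α := fun n => x (n + 1)

/-- The graph on `ℕ → α` induced by the left shift: `x` adjacent to `y` iff
`s x = y` or `s y = x` (and `x ≠ y`). -/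
def shiftGraph (α : Type*) : SimpleGraph (ℕ → α) :=
  SimpleGraph.fromRel fun x y => shift x = y

/-- `ρ_s(x, y) ≤ r` for the graph metric `ρ_s` of the shift graph. -/
def shiftDistLe {α : Type*} (x y : ℕ → α) (r : ℝ) : Prop :=
  ∃ w : (shiftGraph α).Walk x y, (w.length : ℝ) ≤ r

/-- Tail equivalence of sequences. -/
def tailEquiv {α : Type*} (x y : ℕ → α) : Prop :=
  ∃ T0 T1 : ℕ, ∀ n, x (T0 + n) = y (T1 + n)

/-- A finite Borel equivalence relation. -/
def IsFiniteBorelEquiv {X : Type*} [MeasurableSpace X] (F : X → X → Prop) : Prop :=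
  Equivalence F ∧ MeasurableSet {p : X × X | F p.1 p.2} ∧ ∀ x, {y | F x y}.Finite

/-- A relation is hyperfinite if it is the union of an increasing sequence of
finite Borel equivalence relations. -/
def Hyperfinite {X : Type*} [MeasurableSpace X] (E : X → X → Prop) : Prop :=
  ∃ F : ℕ → X → X → Prop, (∀ n, IsFiniteBorelEquiv (F n)) ∧
    (∀ n x y, F n x y → F (n + 1) x y) ∧ ∀ x y, E x y ↔ ∃ n, F n x y

end BA

namespace BAP

open BA

variable {S : Type*}

/-! ### iterate basics -/

lemma itco (t : ℕ) (z : ℕ → S) (i : ℕ) : (shift^[t] z) i = z (i + t) := by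
  induction t generalizing z i with
  | zero => rfl
  | succ t ih =>
    rw [Function.iterate_succ_apply]
    show (shift^[t] (shift z)) i = _
    rw [ih]
    show z (i + t + 1) = z (i + (t+1))
    ring_nf

lemma itadd (a b : ℕ) (z : ℕ → S) : shift^[a + b] z = shift^[a] (shift^[b] z) := by
  rw [Function.iterate_add_apply]

/-! ### periodicity -/

abbrev Per (z : ℕ → S) : Prop := ∃ p, 1 ≤ p ∧ shift^[p] z = z

abbrev EvP (z : ℕ → S) : Prop := ∃ e, Per (shift^[e] z)

lemma per_shift {z : ℕ → S} (h : Per z) (s : ℕ) : Per (shift^[s] z) := by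
  obtain ⟨p, hp, hz⟩ := h
  exact ⟨p, hp, by rw [← itadd, Nat.add_comm, itadd, hz]⟩

lemma evp_shift {z : ℕ → S} (h : EvP z) (s : ℕ) : EvP (shift^[s] z) := by
  obtain ⟨e, he⟩ := h
  refine ⟨e, ?_⟩
  have := per_shift he s
  rw [← itadd, Nat.add_comm, itadd] at this
  exact this

lemma evp_of_shift {z : ℕ → S} {s : ℕ} (h : EvP (shift^[s] z)) : EvP z := by
  obtain ⟨e, he⟩ := h
  exact ⟨e + s, by rwa [itadd]⟩

/-- least "pre-period" -/
noncomputable def eV (z : ℕ → S) : ℕ := sInf {e | Per (shift^[e] z)}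

/-- least period (of a periodic point) -/
noncomputable def pV (z : ℕ → S) : ℕ := sInf {p | 1 ≤ p ∧ shift^[p] z = z}

lemma eV_spec {z : ℕ → S} (h : EvP z) : Per (shift^[eV z] z) := Nat.sInf_mem h

lemma eV_le {z : ℕ → S} {m : ℕ} (h : Per (shift^[m] z)) : eV z ≤ m := Nat.sInf_le h

lemma eV_min {z : ℕ → S} {m : ℕ} (hm : m < eV z) : ¬ Per (shift^[m] z) :=
  Nat.notMem_of_lt_sInf hm

lemma eV_zero {z : ℕ → S} (h : Per z) : eV z = 0 :=
  Nat.sInf_eq_zero.mpr (Or.inl (by simpa using h))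

lemma eV_shift {z : ℕ → S} (h : EvP z) {t : ℕ} (ht : t ≤ eV z) :
    eV (shift^[t] z) = eV z - t := by
  have h1 : Per (shift^[eV z - t] (shift^[t] z)) := by
    rw [← itadd, Nat.sub_add_cancel ht]; exact eV_spec h
  have h2 : eV (shift^[t] z) ≤ eV z - t := eV_le h1
  by_contra hcon
  have hlt : eV (shift^[t] z) < eV z - t := by omega
  have h3 : Per (shift^[eV (shift^[t] z)] (shift^[t] z)) := eV_spec (evp_shift h t)
  rw [← itadd] at h3
  exact eV_min (show eV (shift^[t] z) + t < eV z by omega) h3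

lemma pV_spec {z : ℕ → S} (h : Per z) : 1 ≤ pV z ∧ shift^[pV z] z = z := Nat.sInf_mem h

lemma pV_le {z : ℕ → S} {m : ℕ} (h1 : 1 ≤ m) (h2 : shift^[m] z = z) : pV z ≤ m :=
  Nat.sInf_le ⟨h1, h2⟩

lemma pV_min {z : ℕ → S} {m : ℕ} (hm : m < pV z) : ¬ (1 ≤ m ∧ shift^[m] z = z) :=
  Nat.notMem_of_lt_sInf hm

lemma pV_mul {z : ℕ → S} (h : Per z) (m : ℕ) : shift^[pV z * m] z = z := by
  induction m with
  | zero => rfl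
  | succ m ih =>
    rw [Nat.mul_succ, itadd, (pV_spec h).2, ih]

lemma pV_mod {z : ℕ → S} (h : Per z) (j : ℕ) : shift^[j] z = shift^[j % pV z] z := by
  conv_lhs => rw [← Nat.mod_add_div j (pV z), itadd, pV_mul h]

lemma per_of_evp_eV_zero {z : ℕ → S} (h : EvP z) (h0 : eV z = 0) : Per z := by
  have := eV_spec h; rwa [h0] at this

lemma ret_le {z : ℕ → S} (h : Per z) (s : ℕ) : s ≤ pV z * (s / pV z + 1) := by
  have h1 := Nat.mod_add_div s (pV z)
  have h2 := Nat.mod_lt s (show 0 < pV z from (pV_spec h).1)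
  have h3 : pV z * (s / pV z + 1) = pV z * (s / pV z) + pV z := by ring
  omega

/-- return to the base point: some positive iterate of `shift^[s] z` is `z` again -/
lemma ret {z : ℕ → S} (h : Per z) (s : ℕ) :
    shift^[pV z * (s / pV z + 1) - s] (shift^[s] z) = z := by
  rw [← itadd, Nat.sub_add_cancel (ret_le h s)]
  exact pV_mul h _

lemma pV_shift {z : ℕ → S} (h : Per z) (s : ℕ) : pV (shift^[s] z) = pV z := by
  have hp := pV_spec h
  have h1 : shift^[pV z] (shift^[s] z) = shift^[s] z := by
    rw [← itadd, Nat.add_comm, itadd, hp.2]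
  have hps : Per (shift^[s] z) := ⟨pV z, hp.1, h1⟩
  have hq := pV_spec hps
  -- any period of the shift is a period of z
  obtain ⟨hq1, hq2⟩ := hq
  set q := pV (shift^[s] z) with hqd
  have h2 : shift^[q] z = z := by
    conv_lhs => rw [← ret h s, ← itadd, Nat.add_comm, itadd, hq2, ret h s]
  exact le_antisymm (pV_le hp.1 h1) (pV_le hq1 h2)

/-! ### encoding windows by naturals -/

lemma exists_enc (α : Type*) [Finite α] :
    ∃ f : α → ℕ, (∀ a, f a < Nat.card α) ∧ Function.Injective f := by
  cases isEmpty_or_nonempty α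
  · exact ⟨fun _ => 0, fun a => (IsEmpty.false a).elim, fun a => (IsEmpty.false a).elim⟩
  · letI := Fintype.ofFinite α
    refine ⟨fun a => (Fintype.equivFin α a : ℕ), fun a => ?_, ?_⟩
    · rw [Nat.card_eq_fintype_card]; exact (Fintype.equivFin α a).isLt
    · intro a b h
      exact (Fintype.equivFin α).injective (Fin.val_injective h)

noncomputable def encW (α : Type*) [Finite α] : α → ℕ := (exists_enc α).choose

lemma encW_lt {α : Type*} [Finite α] (a : α) : encW α a < Nat.card α :=
  (exists_enc α).choose_spec.1 a

lemma encW_inj {α : Type*} [Finite α] : Function.Injective (encW α) :=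
  (exists_enc α).choose_spec.2

def win (k : ℕ) (z : ℕ → S) : Fin k → S := fun i => z i

noncomputable def nu [Finite S] (k : ℕ) (z : ℕ → S) : ℕ := encW (Fin k → S) (win k z)

section Anchors

variable [Finite S]

lemma nu_lt (k : ℕ) (z : ℕ → S) : nu k z < Nat.card (Fin k → S) := encW_lt _

lemma nu_inj {k : ℕ} {z z' : ℕ → S} (h : nu k z = nu k z') : ∀ i < k, z i = z' i := by
  intro i hi
  have := encW_inj h
  exact congrFun this ⟨i, hi⟩

lemma nu_congr {k : ℕ} {z z' : ℕ → S} (h : ∀ i < k, z i = z' i) : nu k z = nu k z' := by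
  unfold nu
  congr 1
  funext i
  exact h i i.2

/-- the anchor set: windows that are strictly smaller than the following `n` windows -/
def Anc (n k : ℕ) : Set (ℕ → S) :=
  {z | ∀ d, 1 ≤ d → d ≤ n → nu k z < nu k (shift^[d] z)}

lemma anchor_exists {n k : ℕ} (hn : 1 ≤ n) (hk : n.factorial + n ≤ k) {z : ℕ → S}
    (hz : ¬ EvP z) : ∃ t, 1 ≤ t ∧ shift^[t] z ∈ Anc n k := by
  by_contra hcon
  push_neg at hcon
  have step : ∀ t, 1 ≤ t → ∃ d, 1 ≤ d ∧ d ≤ n ∧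
      nu k (shift^[t + d] z) ≤ nu k (shift^[t] z) := by
    intro t ht
    have h1 := hcon t ht
    simp only [Anc, Set.mem_setOf_eq, not_forall] at h1
    obtain ⟨d, hd1, hd2, hd3⟩ := h1
    refine ⟨d, hd1, hd2, ?_⟩
    rw [Nat.add_comm t d, itadd]
    exact not_lt.mp hd3
  -- the descent chain
  let T : ℕ → {t : ℕ // 1 ≤ t} := fun i => Nat.rec ⟨1, le_refl 1⟩
    (fun _ p => ⟨p.1 + (step p.1 p.2).choose, by
      have := (step p.1 p.2).choose_spec; omega⟩) i
  have hTsucc : ∀ i, (T (i+1)).1 = (T i).1 + (step (T i).1 (T i).2).choose := fun _ => rfl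
  set ν : ℕ → ℕ := fun i => nu k (shift^[(T i).1] z) with hν
  have hstep : ∀ i, 1 ≤ (step (T i).1 (T i).2).choose ∧ (step (T i).1 (T i).2).choose ≤ n ∧
      ν (i + 1) ≤ ν i := by
    intro i
    have h1 := (step (T i).1 (T i).2).choose_spec
    refine ⟨h1.1, h1.2.1, ?_⟩
    show nu k (shift^[(T (i+1)).1] z) ≤ _
    rw [hTsucc]
    exact h1.2.2
  have anti : ∀ i m, ν (i + m) ≤ ν i := by
    intro i m
    induction m with
    | zero => exact le_refl _
    | succ m ih =>
      have h1 : ν (i + m + 1) ≤ ν (i + m) := (hstep (i+m)).2.2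
      rw [show i + (m+1) = i + m + 1 by ring]
      exact le_trans h1 ih
  obtain ⟨i₀, hi₀⟩ : ∃ i₀, ν i₀ = sInf (Set.range ν) :=
    (Nat.sInf_mem (Set.range_nonempty ν) : sInf (Set.range ν) ∈ _)
  have hconst : ∀ m, ν (i₀ + m) = ν i₀ := by
    intro m
    have h1 : ν (i₀ + m) ≤ ν i₀ := anti i₀ m
    have h2 : sInf (Set.range ν) ≤ ν (i₀ + m) := Nat.sInf_le ⟨i₀ + m, rfl⟩
    omega
  -- window equality at each chain point beyond i₀
  have key : ∀ i, i₀ ≤ i → ∀ j, (T i).1 ≤ j → j < (T (i+1)).1 →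
      z j = z (j + n.factorial) := by
    intro i hi j hj1 hj2
    set t := (T i).1 with htdef
    set dd := (step (T i).1 (T i).2).choose with hdd
    have hd1 : 1 ≤ dd := (hstep i).1
    have hd2 : dd ≤ n := (hstep i).2.1
    have hval : ν i = ν (i + 1) := by
      obtain ⟨m, hm⟩ := Nat.exists_eq_add_of_le hi
      rw [hm, show i₀ + m + 1 = i₀ + (m+1) by ring, hconst, hconst]
    have hj2' : j < t + dd := by
      rw [hTsucc] at hj2; exact hj2
    have hwin : ∀ μ, μ < k → z (μ + t) = z (μ + (t + dd)) := by
      have hnu : nu k (shift^[t] z) = nu k (shift^[t + dd] z) := hval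
      intro μ hμ
      have h3 := nu_inj hnu μ hμ
      rwa [itco, itco] at h3
    have weq : ∀ y, t ≤ y → y < t + k → z y = z (y + dd) := by
      intro y hy1 hy2
      have := hwin (y - t) (by omega)
      rw [show y - t + t = y by omega] at this
      rw [show y - t + (t + dd) = y + dd by omega] at this
      exact this
    have hdvd : dd ∣ n.factorial := Nat.dvd_factorial hd1 hd2
    obtain ⟨c, hc⟩ := hdvd
    have hchain : ∀ m, m ≤ c → z j = z (j + dd * m) := by
      intro m hm
      induction m with
      | zero => simp
      | succ m ih =>
        have h4 : z j = z (j + dd * m) := ih (by omega)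
        have h5 : z (j + dd * m) = z (j + dd * m + dd) := by
          apply weq
          · omega
          · have e1 : dd * (m + 1) ≤ dd * c := Nat.mul_le_mul_left dd hm
            have e2 : dd * (m+1) = dd * m + dd := by ring
            have e3 : 1 ≤ n.factorial := Nat.factorial_pos n
            have e4 : dd * c = n.factorial := hc.symm
            omega
        rw [h4, h5]; congr 1; ring
    have := hchain c (le_refl c)
    rwa [← hc] at this
  -- cover: every j ≥ T i₀ lies in a chain interval
  have Tmono : ∀ i m, (T i).1 + m ≤ (T (i + m)).1 := by
    intro i m
    induction m with
    | zero => simp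
    | succ m ih =>
      have h1 := (hstep (i + m)).1
      have h2 := hTsucc (i + m)
      have : i + (m + 1) = (i + m) + 1 := by ring
      rw [this]
      omega
  have hper : ∀ j, (T i₀).1 ≤ j → z j = z (j + n.factorial) := by
    intro j hj
    have hne : ∃ m, j < (T (i₀ + m)).1 := by
      refine ⟨j + 1, ?_⟩
      have := Tmono i₀ (j + 1)
      omega
    set m₁ := sInf {m | j < (T (i₀ + m)).1} with hm₁
    have hmem : j < (T (i₀ + m₁)).1 := Nat.sInf_mem hne
    have hm₁pos : 1 ≤ m₁ := by
      rcases Nat.eq_zero_or_pos m₁ with h | h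
      · rw [h] at hmem; simp at hmem; omega
      · exact h
    have hnm : ¬ (m₁ - 1 ∈ {m | j < (T (i₀ + m)).1}) :=
      Nat.notMem_of_lt_sInf (by omega)
    have hnotmem : (T (i₀ + (m₁ - 1))).1 ≤ j := not_lt.mp hnm
    exact key (i₀ + (m₁ - 1)) (by omega)  j hnotmem
      (by rw [show i₀ + (m₁ - 1) + 1 = i₀ + m₁ by omega]; exact hmem)
  -- conclude z is eventually periodic
  apply hz
  refine ⟨(T i₀).1, n.factorial, Nat.factorial_pos n, ?_⟩
  funext μ
  rw [← itadd, itco, itco]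
  have := hper (μ + (T i₀).1) (by omega)
  rw [this]; congr 1; ring

end Anchors

section Markers

variable [Finite S]
/-! ### cycles and the choice of base point -/

def Cyc (z : ℕ → S) : Set (ℕ → S) := Set.range (fun j => shift^[j] z)

lemma cyc_ne (z : ℕ → S) : (Cyc z).Nonempty := ⟨z, 0, rfl⟩

noncomputable def bb (z : ℕ → S) : ℕ → S := (cyc_ne z).some

lemma bb_mem (z : ℕ → S) : ∃ j, shift^[j] z = bb z := (cyc_ne z).some_mem

lemma some_congr {α : Type*} {s t : Set α} (h : s = t) (hs : s.Nonempty) (ht : t.Nonempty) :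
    hs.some = ht.some := by subst h; rfl

lemma cyc_shift {z : ℕ → S} (h : Per z) (s : ℕ) : Cyc (shift^[s] z) = Cyc z := by
  ext v
  constructor
  · rintro ⟨j, rfl⟩
    refine ⟨j + s, ?_⟩
    show shift^[j + s] z = shift^[j] (shift^[s] z)
    exact itadd j s z
  · rintro ⟨j, rfl⟩
    refine ⟨j + (pV z * (s / pV z + 1) - s), ?_⟩
    show shift^[j + (pV z * (s / pV z + 1) - s)] (shift^[s] z) = shift^[j] z
    rw [itadd, ret h s]

lemma bb_shift {z : ℕ → S} (h : Per z) (s : ℕ) : bb (shift^[s] z) = bb z :=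
  some_congr (cyc_shift h s) _ _

lemma bb_reach {z : ℕ → S} (h : Per z) : ∃ t, 1 ≤ t ∧ shift^[t] z = bb z := by
  obtain ⟨j, hj⟩ := bb_mem z
  rcases Nat.eq_zero_or_pos j with h0 | h1
  · refine ⟨pV z, (pV_spec h).1, ?_⟩
    rw [(pV_spec h).2, ← hj, h0]
    rfl
  · exact ⟨j, h1, hj⟩

/-! ### the marker set -/

def Mk (n k : ℕ) : Set (ℕ → S) :=
  {v | (¬ EvP v ∧ ∃ q, 1 ≤ q ∧ shift^[q*n] v ∈ Anc n k ∧
          ∀ u, 1 ≤ u → u < q*n → shift^[u] v ∉ Anc n k)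
     ∨ (EvP v ∧ 1 ≤ eV v ∧ ∃ q, 1 ≤ q ∧ eV v = q * n)
     ∨ (EvP v ∧ eV v = 0 ∧ pV v < n ∧ v = bb v)
     ∨ (EvP v ∧ eV v = 0 ∧ n ≤ pV v ∧ ∃ q, 1 ≤ q ∧ shift^[q*n] v = bb v ∧
          ∀ u, 1 ≤ u → u < q*n → shift^[u] v ≠ bb v)}

/-! ### spacing of markers -/

lemma spac_core {q q' s n : ℕ} (hs1 : 1 ≤ s) (hs2 : s < n)
    (heq : s + q' * n = q * n) : False := by
  have h1 : q' * n < q * n := by omega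
  have hq : q' < q := Nat.lt_of_mul_lt_mul_right h1
  have h2 : (q' + 1) * n ≤ q * n := Nat.mul_le_mul_right n hq
  have h3 : (q' + 1) * n = q' * n + n := by ring
  omega

lemma least_spacing {n s q q' : ℕ} (hs1 : 1 ≤ s) (hs2 : s < n) (hq : 1 ≤ q) (hq' : 1 ≤ q')
    (P : ℕ → Prop) (hP1 : P (q * n)) (hL1 : ∀ u, 1 ≤ u → u < q * n → ¬ P u)
    (hP2 : P (s + q' * n)) (hL2 : ∀ u, 1 ≤ u → u < q' * n → ¬ P (s + u)) : False := by
  have hnq : n ≤ q * n := Nat.le_mul_of_pos_left n hq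
  have hnq' : n ≤ q' * n := Nat.le_mul_of_pos_left n hq'
  have hA : q * n ≤ s + q' * n := by
    by_contra hcon
    push_neg at hcon
    exact hL1 _ (by omega) hcon hP2
  have hB : s + q' * n ≤ q * n := by
    by_contra hcon
    push_neg at hcon
    refine hL2 (q * n - s) (by omega) (by omega) ?_
    rw [show s + (q*n - s) = q*n by omega]
    exact hP1
  exact spac_core hs1 hs2 (le_antisymm hB hA)

lemma no_two_close {n k : ℕ} {z : ℕ → S} {s : ℕ} (hs1 : 1 ≤ s) (hs2 : s < n)
    (h1 : z ∈ Mk n k) (h2 : shift^[s] z ∈ Mk n k) : shift^[s] z = z := by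
  have hitsw : ∀ u, shift^[u] (shift^[s] z) = shift^[s + u] z := by
    intro u; rw [Nat.add_comm, itadd]
  rcases h1 with ⟨ha, q, hq, hqA, hqL⟩ | ⟨he, he1, q, hq, heq⟩ |
      ⟨he, he0, hp, hb⟩ | ⟨he, he0, hp, q, hq, hqB, hqL⟩
  · -- aperiodic marker
    have ha2 : ¬ EvP (shift^[s] z) := fun hE => ha (evp_of_shift hE)
    rcases h2 with ⟨_, q', hq', hq'A, hq'L⟩ | ⟨hE, _⟩ | ⟨hE, _⟩ | ⟨hE, _⟩
    · exfalso
      refine least_spacing hs1 hs2 hq hq' (fun u => shift^[u] z ∈ Anc n k) hqA hqL ?_ ?_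
      · show shift^[s + q' * n] z ∈ Anc n k
        rw [← hitsw]; exact hq'A
      · intro u hu1 hu2
        show shift^[s + u] z ∉ Anc n k
        rw [← hitsw]
        exact hq'L u hu1 hu2
    all_goals exact absurd hE ha2
  · -- pre-cycle marker
    exfalso
    have hnq : n ≤ q * n := Nat.le_mul_of_pos_left n hq
    have hsle : s ≤ eV z := by omega
    have heVs : eV (shift^[s] z) = eV z - s := eV_shift he hsle
    have hpos : 1 ≤ eV (shift^[s] z) := by omega
    rcases h2 with ⟨hE, _⟩ | ⟨_, _, q', hq', heq'⟩ | ⟨_, h0, _⟩ | ⟨_, h0, _⟩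
    · exact hE (evp_shift he s)
    · rw [heVs, heq] at heq'
      exact spac_core (q := q) (q' := q') hs1 hs2 (by omega)
    all_goals omega
  · -- small-cycle marker
    have hper : Per z := per_of_evp_eV_zero he he0
    have hpers : Per (shift^[s] z) := per_shift hper s
    rcases h2 with ⟨hE, _⟩ | ⟨_, hpos, _⟩ | ⟨_, _, _, hb'⟩ | ⟨_, _, hp', _⟩
    · exact absurd ⟨0, hpers⟩ hE
    · exfalso
      rw [eV_zero hpers] at hpos
      omega
    · rw [hb', bb_shift hper s, ← hb]
    · exfalso
      rw [pV_shift hper s] at hp'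
      omega
  · -- big-cycle marker
    exfalso
    have hper : Per z := per_of_evp_eV_zero he he0
    have hpers : Per (shift^[s] z) := per_shift hper s
    rcases h2 with ⟨hE, _⟩ | ⟨_, hpos, _⟩ | ⟨_, _, hp', _⟩ | ⟨_, _, _, q', hq', hq'B, hq'L⟩
    · exact hE ⟨0, hpers⟩
    · rw [eV_zero hpers] at hpos
      omega
    · rw [pV_shift hper s] at hp'
      omega
    · refine least_spacing hs1 hs2 hq hq' (fun u => shift^[u] z = bb z) hqB hqL ?_ ?_
      · show shift^[s + q' * n] z = bb z
        rw [← hitsw, ← bb_shift hper s]; exact hq'B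
      · intro u hu1 hu2
        show ¬ shift^[s + u] z = bb z
        rw [← hitsw, ← bb_shift hper s]
        exact hq'L u hu1 hu2

/-! ### existence of markers within bounded distance -/

lemma mark_near_aper {n k : ℕ} (hn : 1 ≤ n) {z : ℕ → S} (hz : ¬ EvP z) {D : ℕ} (hD : n ≤ D)
    (hA : shift^[D] z ∈ Anc n k) (hL : ∀ u, 1 ≤ u → u < D → shift^[u] z ∉ Anc n k) :
    ∃ t, t < n ∧ shift^[t] z ∈ Mk n k := by
  have hmd : D % n + D / n * n = D := Nat.mod_add_div' D n
  have hq1 : 1 ≤ D / n := (Nat.one_le_div_iff hn).mpr hD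
  refine ⟨D % n, Nat.mod_lt _ hn, Or.inl ⟨fun hE => hz (evp_of_shift hE), D / n, hq1, ?_, ?_⟩⟩
  · rw [← itadd, show D / n * n + D % n = D by omega]
    exact hA
  · intro u hu1 hu2
    rw [← itadd]
    exact hL _ (by omega) (by omega)

lemma mark_near_cyc {n k : ℕ} (hn : 1 ≤ n) {z : ℕ → S} (hz : Per z) (hpn : n ≤ pV z)
    {D : ℕ} (hD : n ≤ D) (hB : shift^[D] z = bb z)
    (hL : ∀ u, 1 ≤ u → u < D → shift^[u] z ≠ bb z) :
    ∃ t, t < n ∧ shift^[t] z ∈ Mk n k := by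
  have hmd : D % n + D / n * n = D := Nat.mod_add_div' D n
  have hq1 : 1 ≤ D / n := (Nat.one_le_div_iff hn).mpr hD
  have hpers : Per (shift^[D % n] z) := per_shift hz _
  refine ⟨D % n, Nat.mod_lt _ hn, Or.inr (Or.inr (Or.inr
    ⟨⟨0, hpers⟩, eV_zero hpers, by rw [pV_shift hz]; exact hpn, D / n, hq1, ?_, ?_⟩))⟩
  · rw [← itadd, show D / n * n + D % n = D by omega, bb_shift hz]
    exact hB
  · intro u hu1 hu2
    rw [← itadd, bb_shift hz]
    exact hL _ (by omega) (by omega)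

lemma exists_marker_cyc {n k : ℕ} (hn : 1 ≤ n) {z : ℕ → S} (hz : Per z) :
    ∃ t, t ≤ 2 * n ∧ shift^[t] z ∈ Mk n k := by
  by_cases hp : pV z < n
  · -- small cycle: the base point is a marker
    obtain ⟨j₀, hj₀⟩ := bb_mem z
    have hj : shift^[j₀ % pV z] z = bb z := by rw [← pV_mod hz]; exact hj₀
    have hjlt : j₀ % pV z < pV z := Nat.mod_lt _ (pV_spec hz).1
    have hpers : Per (shift^[j₀ % pV z] z) := per_shift hz _
    refine ⟨j₀ % pV z, by omega, Or.inr (Or.inr (Or.inl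
      ⟨⟨0, hpers⟩, eV_zero hpers, ?_, ?_⟩))⟩
    · rw [pV_shift hz]; omega
    · rw [bb_shift hz]; exact hj
  · -- big cycle
    push_neg at hp
    set D := sInf {t | 1 ≤ t ∧ shift^[t] z = bb z} with hDdef
    have hDmem : 1 ≤ D ∧ shift^[D] z = bb z := Nat.sInf_mem (bb_reach hz)
    have hDL : ∀ u, 1 ≤ u → u < D → shift^[u] z ≠ bb z := by
      intro u hu1 hu2 hu3
      have hnm : u ∉ {t : ℕ | 1 ≤ t ∧ shift^[t] z = bb z} := Nat.notMem_of_lt_sInf hu2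
      exact hnm ⟨hu1, hu3⟩
    by_cases hDn : n ≤ D
    · obtain ⟨t, ht, hmk⟩ := mark_near_cyc hn hz hp hDn hDmem.2 hDL
      exact ⟨t, by omega, hmk⟩
    · -- jump to the base point, whose own return time is pV z ≥ n
      push_neg at hDn
      set w := shift^[D] z with hwdef
      have hw : Per w := per_shift hz D
      have hbbw : bb w = bb z := bb_shift hz D
      have hpw : pV w = pV z := pV_shift hz D
      have hwb : w = bb z := hDmem.2
      have hret : shift^[pV w] w = bb w := by
        rw [(pV_spec hw).2, hbbw, hwb]
      have hretL : ∀ u, 1 ≤ u → u < pV w → shift^[u] w ≠ bb w := by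
        intro u hu1 hu2 hcon
        rw [hbbw, ← hwb] at hcon
        exact pV_min hu2 ⟨hu1, hcon⟩
      obtain ⟨t, ht, hmk⟩ := mark_near_cyc hn hw (by omega) (by omega) hret hretL
      refine ⟨t + D, by omega, ?_⟩
      rw [itadd]
      exact hmk

lemma exists_marker_evp {n k : ℕ} (hn : 1 ≤ n) {z : ℕ → S} (hz : EvP z) :
    ∃ t, t ≤ 3 * n ∧ shift^[t] z ∈ Mk n k := by
  by_cases he : n ≤ eV z
  · have hmd : eV z % n + eV z / n * n = eV z := Nat.mod_add_div' (eV z) n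
    have hq1 : 1 ≤ eV z / n := (Nat.one_le_div_iff hn).mpr he
    have hnq : n ≤ eV z / n * n := by
      calc n = 1 * n := by ring
      _ ≤ eV z / n * n := Nat.mul_le_mul_right n hq1
    refine ⟨eV z % n, by have := Nat.mod_lt (eV z) hn; omega, Or.inr (Or.inl
      ⟨evp_shift hz _, ?_, eV z / n, hq1, ?_⟩)⟩
    · rw [eV_shift hz (by omega)]; omega
    · rw [eV_shift hz (by omega)]; omega
  · push_neg at he
    have hc : Per (shift^[eV z] z) := eV_spec hz
    obtain ⟨t, ht, hmk⟩ := exists_marker_cyc hn hc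
    refine ⟨t + eV z, by omega, ?_⟩
    rw [itadd]
    exact hmk

lemma exists_marker_aper {n k : ℕ} (hn : 1 ≤ n) (hk : n.factorial + n ≤ k) {z : ℕ → S}
    (hz : ¬ EvP z) :
    ∃ t, t ≤ n * (Nat.card (Fin k → S) + 3) ∧ shift^[t] z ∈ Mk n k := by
  set N := Nat.card (Fin k → S) with hN
  set dd : (ℕ → S) → ℕ := fun w => sInf {t | 1 ≤ t ∧ shift^[t] w ∈ Anc n k} with hdd
  have haps : ∀ t, ¬ EvP (shift^[t] z) := fun t hE => hz (evp_of_shift hE)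
  have hddspec : ∀ w, ¬ EvP w → 1 ≤ dd w ∧ shift^[dd w] w ∈ Anc n k :=
    fun w hw => Nat.sInf_mem (anchor_exists hn hk hw)
  have hddL : ∀ w u, 1 ≤ u → u < dd w → shift^[u] w ∉ Anc n k := by
    intro w u hu1 hu2 hu3
    exact Nat.notMem_of_lt_sInf hu2 ⟨hu1, hu3⟩
  by_cases h0 : n ≤ dd z
  · obtain ⟨t, ht, hmk⟩ := mark_near_aper hn hz h0 (hddspec z hz).2 (hddL z)
    refine ⟨t, ?_, hmk⟩
    have : 1 ≤ N + 3 := by omega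
    have : n * 1 ≤ n * (N + 3) := Nat.mul_le_mul_left n this
    omega
  · push_neg at h0
    -- chain of consecutive anchors
    set σ : ℕ → ℕ := fun i => Nat.rec (dd z) (fun _ p => p + dd (shift^[p] z)) i with hσ
    have hσs : ∀ i, σ (i+1) = σ i + dd (shift^[σ i] z) := fun _ => rfl
    have hanc : ∀ i, 1 ≤ σ i ∧ shift^[σ i] z ∈ Anc n k := by
      intro i
      induction i with
      | zero => exact hddspec z hz
      | succ i ih =>
        have h1 := hddspec (shift^[σ i] z) (haps _)
        constructor
        · have := h1.1; rw [hσs]; omega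
        · rw [hσs, Nat.add_comm, itadd]
          exact h1.2
    -- there is an anchor with a big gap among the first N+1
    have claim : ∃ i, i ≤ N ∧ n ≤ dd (shift^[σ i] z) := by
      by_contra hcon
      push_neg at hcon
      have incr : ∀ i, i ≤ N → nu k (shift^[σ i] z) < nu k (shift^[σ (i+1)] z) := by
        intro i hi
        have h1 := (hanc i).2
        have h2 := hddspec (shift^[σ i] z) (haps _)
        have h3 := h1 (dd (shift^[σ i] z)) h2.1 (le_of_lt (hcon i hi))
        rw [← itadd, Nat.add_comm (dd (shift^[σ i] z)) (σ i), ← hσs] at h3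
        exact h3
      have grow : ∀ j, j ≤ N + 1 → j ≤ nu k (shift^[σ j] z) := by
        intro j hj
        induction j with
        | zero => omega
        | succ j ih =>
          have h1 := ih (by omega)
          have h2 := incr j (by omega)
          omega
      have h4 := grow (N+1) (le_refl _)
      have h5 := nu_lt k (shift^[σ (N+1)] z)
      omega
    obtain ⟨iw, hiw, hiwn⟩ := claim
    set i₀ := sInf {i | n ≤ dd (shift^[σ i] z)} with hi₀
    have hi₀mem : n ≤ dd (shift^[σ i₀] z) :=
      Nat.sInf_mem (⟨iw, hiwn⟩ : {i | n ≤ dd (shift^[σ i] z)}.Nonempty)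
    have hi₀le : i₀ ≤ iw := Nat.sInf_le hiwn
    have hi₀lt : ∀ i, i < i₀ → dd (shift^[σ i] z) < n := by
      intro i hi
      have hnm : i ∉ {i | n ≤ dd (shift^[σ i] z)} := Nat.notMem_of_lt_sInf hi
      simp only [Set.mem_setOf_eq, not_le] at hnm
      exact hnm
    have hσbound : ∀ i, i ≤ i₀ → σ i ≤ (n-1) * (i+1) := by
      intro i hi
      induction i with
      | zero =>
        show dd z ≤ (n-1) * 1
        omega
      | succ i ih =>
        have h1 := ih (by omega)
        have h2 := hi₀lt i (by omega)
        have h3 : (n-1) * (i+1+1) = (n-1)*(i+1) + (n-1) := by ring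
        have h4 := hσs i
        have h5 := (hddspec (shift^[σ i] z) (haps _)).1
        omega
    obtain ⟨t, ht, hmk⟩ := mark_near_aper hn (haps (σ i₀)) hi₀mem
      (hddspec (shift^[σ i₀] z) (haps _)).2 (hddL (shift^[σ i₀] z))
    refine ⟨t + σ i₀, ?_, by rw [itadd]; exact hmk⟩
    have h1 : σ i₀ ≤ (n-1) * (i₀ + 1) := hσbound i₀ (le_refl _)
    have h2 : (n-1) * (i₀+1) ≤ (n-1) * (N+1) := Nat.mul_le_mul_left _ (by omega)
    have h3 : (n-1) * (N+1) ≤ n * (N+1) := Nat.mul_le_mul_right _ (by omega)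
    have h4 : n * (N+3) = n * (N+1) + n * 2 := by ring
    omega

noncomputable def CC (S : Type*) [Finite S] (n k : ℕ) : ℕ := n * (Nat.card (Fin k → S) + 3)

lemma exists_marker {n k : ℕ} (hn : 1 ≤ n) (hk : n.factorial + n ≤ k) (z : ℕ → S) :
    ∃ t, t ≤ CC S n k ∧ shift^[t] z ∈ Mk n k := by
  by_cases hz : EvP z
  · obtain ⟨t, ht, hmk⟩ := exists_marker_evp (k := k) hn hz
    refine ⟨t, ?_, hmk⟩
    show t ≤ n * (Nat.card (Fin k → S) + 3)
    have h1 : n * (Nat.card (Fin k → S) + 3) = n * Nat.card (Fin k → S) + 3 * n := by ring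
    omega
  · obtain ⟨t, ht, hmk⟩ := exists_marker_aper hn hk hz
    exact ⟨t, ht, hmk⟩

/-! ### the jump function `gg` and the two-values-per-window lemma -/

noncomputable def gg (n k : ℕ) (z : ℕ → S) : ℕ := sInf {t | shift^[t] z ∈ Mk n k}

lemma gg_spec {n k : ℕ} (hn : 1 ≤ n) (hk : n.factorial + n ≤ k) (z : ℕ → S) :
    shift^[gg n k z] z ∈ Mk n k := by
  obtain ⟨t, _, hmk⟩ := exists_marker (k := k) hn hk z
  exact Nat.sInf_mem (⟨t, hmk⟩ : {t | shift^[t] z ∈ Mk n k}.Nonempty)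

lemma gg_le {n k : ℕ} (hn : 1 ≤ n) (hk : n.factorial + n ≤ k) (z : ℕ → S) :
    gg n k z ≤ CC S n k := by
  obtain ⟨t, ht, hmk⟩ := exists_marker (k := k) hn hk z
  exact le_trans (Nat.sInf_le hmk) ht

lemma gg_min {n k : ℕ} {z : ℕ → S} {u : ℕ} (hu : u < gg n k z) : shift^[u] z ∉ Mk n k :=
  Nat.notMem_of_lt_sInf hu

/-- the "next marker at or after time `t`" function along the forward orbit of `x` -/
noncomputable def vf (n k : ℕ) (x : ℕ → S) (t : ℕ) : ℕ := gg n k (shift^[t] x) + t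

lemma vf_ge (n k : ℕ) (x : ℕ → S) (t : ℕ) : t ≤ vf n k x t := by
  unfold vf; omega

lemma vf_visit {n k : ℕ} (hn : 1 ≤ n) (hk : n.factorial + n ≤ k) (x : ℕ → S) (t : ℕ) :
    shift^[vf n k x t] x ∈ Mk n k := by
  unfold vf
  rw [itadd]
  exact gg_spec hn hk _

lemma vf_min {n k : ℕ} (x : ℕ → S) {t s : ℕ} (h1 : t ≤ s) (h2 : s < vf n k x t) :
    shift^[s] x ∉ Mk n k := by
  have h3 : s - t < gg n k (shift^[t] x) := by unfold vf at h2; omega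
  have h4 := gg_min h3
  rw [← itadd, show s - t + t = s by omega] at h4
  exact h4

lemma main_count {n k : ℕ} (hn : 1 ≤ n) (hk : n.factorial + n ≤ k) (x : ℕ → S)
    {t₁ t₂ t₃ : ℕ} (h12 : t₁ ≤ t₂) (h23 : t₂ ≤ t₃) (h3 : t₃ < n)
    (d12 : shift^[vf n k x t₁] x ≠ shift^[vf n k x t₂] x)
    (d23 : shift^[vf n k x t₂] x ≠ shift^[vf n k x t₃] x) : False := by
  set τ₁ := vf n k x t₁ with hτ₁
  set τ₂ := vf n k x t₂ with hτ₂
  set τ₃ := vf n k x t₃ with hτ₃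
  -- monotonicity
  have mono : ∀ a b : ℕ, a ≤ b → vf n k x a ≤ vf n k x b := by
    intro a b hab
    by_contra hcon
    push_neg at hcon
    have h4 : a ≤ vf n k x b := le_trans hab (vf_ge n k x b)
    exact vf_min x h4 hcon (vf_visit hn hk x b)
  have m12 : τ₁ ≤ τ₂ := mono _ _ h12
  have m23 : τ₂ ≤ τ₃ := mono _ _ h23
  have ne12 : τ₁ ≠ τ₂ := by
    intro h
    rw [h] at d12
    exact d12 rfl
  have ne23 : τ₂ ≠ τ₃ := by
    intro h
    rw [h] at d23
    exact d23 rfl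
  -- spacing: τ₂ ≥ τ₁ + n
  have hspace : τ₁ + n ≤ τ₂ := by
    by_contra hcon
    push_neg at hcon
    have hs1 : 1 ≤ τ₂ - τ₁ := by omega
    have hs2 : τ₂ - τ₁ < n := by omega
    have h2' : shift^[τ₂ - τ₁] (shift^[τ₁] x) ∈ Mk n k := by
      rw [← itadd, show τ₂ - τ₁ + τ₁ = τ₂ by omega]
      exact vf_visit hn hk x t₂
    have heq := no_two_close hs1 hs2 (vf_visit hn hk x t₁) h2'
    rw [← itadd, show τ₂ - τ₁ + τ₁ = τ₂ by omega] at heq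
    exact d12 heq.symm
  -- but also τ₂ < t₃
  have hlt : τ₂ < t₃ := by
    by_contra hcon
    push_neg at hcon
    have : τ₂ < τ₃ := by omega
    exact vf_min x hcon this (vf_visit hn hk x t₂)
  omega

end Markers

section Meas

variable [Finite S] [MeasurableSpace S] [DiscreteMeasurableSpace S]

lemma meas_coord (i : ℕ) (c : S) : MeasurableSet {z : ℕ → S | z i = c} := by
  have h : {z : ℕ → S | z i = c} = (fun z : ℕ → S => z i) ⁻¹' {c} := rfl
  rw [h]
  exact measurable_pi_apply i (measurableSet_singleton c)

lemma meas_coord_eq (i j : ℕ) : MeasurableSet {z : ℕ → S | z i = z j} := by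
  have : {z : ℕ → S | z i = z j} = ⋃ c : S, ({z : ℕ → S | z i = c} ∩ {z : ℕ → S | z j = c}) := by
    ext z
    simp only [Set.mem_setOf_eq, Set.mem_iUnion, Set.mem_inter_iff]
    exact ⟨fun h => ⟨z j, h, rfl⟩, fun ⟨c, h1, h2⟩ => by rw [h1, h2]⟩
  rw [this]
  exact MeasurableSet.iUnion fun c => (meas_coord i c).inter (meas_coord j c)

lemma meas_shift (j : ℕ) : Measurable (shift^[j] : (ℕ → S) → (ℕ → S)) := by
  have h : (shift^[j] : (ℕ → S) → (ℕ → S)) = fun (z : ℕ → S) (i : ℕ) => z (i + j) := by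
    funext z i
    exact itco j z i
  rw [h]
  exact measurable_pi_lambda _ fun i => measurable_pi_apply (i + j)

instance msc_pi : MeasurableSingletonClass (ℕ → S) := by
  constructor
  intro z
  have h : {z} = ⋂ i : ℕ, {w : ℕ → S | w i = z i} := by
    ext w
    simp [funext_iff]
  rw [h]
  exact MeasurableSet.iInter fun i => meas_coord i (z i)

lemma meas_nu_eq (kk a : ℕ) : MeasurableSet {z : ℕ → S | nu kk z = a} := by
  have h : {z : ℕ → S | nu kk z = a} =
      ⋃ (w : Fin kk → S), ⋃ (_ : encW (Fin kk → S) w = a), ⋂ i : Fin kk,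
        {z : ℕ → S | z i = w i} := by
    ext z
    simp only [Set.mem_setOf_eq, Set.mem_iUnion, Set.mem_iInter]
    constructor
    · intro h
      exact ⟨win kk z, h, fun i => rfl⟩
    · rintro ⟨w, hw, hco⟩
      have : win kk z = w := funext fun i => hco i
      show encW (Fin kk → S) (win kk z) = a
      rw [this]
      exact hw
  rw [h]
  exact MeasurableSet.iUnion fun w => MeasurableSet.iUnion fun _ =>
    MeasurableSet.iInter fun i => meas_coord i (w i)

lemma meas_anc (n kk : ℕ) : MeasurableSet (Anc n kk : Set (ℕ → S)) := by
  have h : (Anc n kk : Set (ℕ → S)) =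
      ⋂ (d : ℕ), ⋂ (_ : 1 ≤ d), ⋂ (_ : d ≤ n),
        ⋃ (a : ℕ), ⋃ (b : ℕ), ⋃ (_ : a < b),
          ({z : ℕ → S | nu kk z = a} ∩ (shift^[d]) ⁻¹' {z : ℕ → S | nu kk z = b}) := by
    ext z
    simp only [Anc, Set.mem_setOf_eq, Set.mem_iInter, Set.mem_iUnion, Set.mem_inter_iff,
      Set.mem_preimage]
    constructor
    · intro h d h1 h2
      exact ⟨nu kk z, nu kk (shift^[d] z), h d h1 h2, rfl, rfl⟩
    · intro h d h1 h2
      obtain ⟨a, b, hab, ha, hb⟩ := h d h1 h2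
      rw [ha, hb]
      exact hab
  rw [h]
  refine MeasurableSet.iInter fun d => MeasurableSet.iInter fun _ =>
    MeasurableSet.iInter fun _ => MeasurableSet.iUnion fun a => MeasurableSet.iUnion fun b =>
    MeasurableSet.iUnion fun _ => (meas_nu_eq _ a).inter (meas_shift d (meas_nu_eq _ b))

lemma evp_set_eq : {z : ℕ → S | EvP z} =
    ⋃ (e : ℕ), ⋃ (p : ℕ), ⋃ (_ : 1 ≤ p), ⋂ (i : ℕ),
      {z : ℕ → S | z (i + (p + e)) = z (i + e)} := by
  ext z
  simp only [Set.mem_setOf_eq, Set.mem_iUnion, Set.mem_iInter]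
  constructor
  · rintro ⟨e, p, hp, hz⟩
    refine ⟨e, p, hp, fun i => ?_⟩
    have := congrFun hz i
    rwa [← itadd, itco, itco] at this
  · rintro ⟨e, p, hp, hco⟩
    refine ⟨e, p, hp, ?_⟩
    funext i
    have := hco i
    rw [← itadd, itco, itco]
    exact this

lemma meas_evp : MeasurableSet {z : ℕ → S | EvP z} := by
  rw [evp_set_eq]
  exact MeasurableSet.iUnion fun e => MeasurableSet.iUnion fun p =>
    MeasurableSet.iUnion fun _ => MeasurableSet.iInter fun i => meas_coord_eq _ _

lemma perset_finite (e p : ℕ) (hp : 1 ≤ p) :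
    {z : ℕ → S | ∀ i : ℕ, z (i + (p + e)) = z (i + e)}.Finite := by
  set Gf : (Fin (e + p) → S) → (ℕ → S) := fun w j =>
    if h : j < e + p then w ⟨j, h⟩ else w ⟨e + (j - e) % p, by
      have := Nat.mod_lt (j - e) (show 0 < p by omega); omega⟩ with hGf
  apply Set.Finite.subset (Set.finite_range Gf)
  intro z hz
  simp only [Set.mem_setOf_eq] at hz
  refine ⟨fun i => z i, ?_⟩
  have key : ∀ j, e ≤ j → z j = z (e + (j - e) % p) := by
    intro j
    induction j using Nat.strong_induction_on with
    | _ j ih =>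
      intro hj
      by_cases hcase : j < e + p
      · have h1 : (j - e) % p = j - e := Nat.mod_eq_of_lt (by omega)
        rw [h1, show e + (j - e) = j by omega]
      · push_neg at hcase
        have h2 : z j = z (j - p) := by
          have h3 := hz (j - p - e)
          rw [show j - p - e + (p + e) = j by omega, show j - p - e + e = j - p by omega] at h3
          exact h3
        have h4 := ih (j - p) (by omega) (by omega)
        have h5 : (j - p - e) % p = (j - e) % p := by
          rw [show j - e = (j - p - e) + p by omega]
          exact (Nat.add_mod_right _ _).symm
        rw [h2, h4, h5]
  funext j
  by_cases hcase : j < e + p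
  · simp only [hGf, dif_pos hcase]
  · simp only [hGf, dif_neg hcase]
    push_neg at hcase
    exact (key j (by omega)).symm

lemma evp_countable : {z : ℕ → S | EvP z}.Countable := by
  rw [evp_set_eq]
  refine Set.countable_iUnion fun e => Set.countable_iUnion fun p => ?_
  refine Set.countable_iUnion fun hp => ?_
  have hsub : (⋂ (i : ℕ), {z : ℕ → S | z (i + (p + e)) = z (i + e)}) ⊆
      {z : ℕ → S | ∀ i : ℕ, z (i + (p + e)) = z (i + e)} := by
    intro z hz
    simp only [Set.mem_iInter] at hz
    exact hz
  exact Set.Countable.mono hsub (perset_finite e p hp).countable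

lemma meas_mk (n kk : ℕ) : MeasurableSet (Mk n kk : Set (ℕ → S)) := by
  set A1 : Set (ℕ → S) := {v | ¬ EvP v} ∩
      (⋃ (q : ℕ), ⋃ (_ : 1 ≤ q), ((shift^[q*n]) ⁻¹' (Anc n kk) ∩
        ⋂ (u : ℕ), ⋂ (_ : 1 ≤ u), ⋂ (_ : u < q*n), ((shift^[u]) ⁻¹' (Anc n kk))ᶜ)) with hA1
  have hA1meas : MeasurableSet A1 := by
    refine MeasurableSet.inter (meas_evp.compl) ?_
    refine MeasurableSet.iUnion fun q => MeasurableSet.iUnion fun _ => ?_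
    refine ((meas_shift _) (meas_anc n kk)).inter ?_
    exact MeasurableSet.iInter fun u => MeasurableSet.iInter fun _ =>
      MeasurableSet.iInter fun _ => ((meas_shift _) (meas_anc n kk)).compl
  have hsplit : (Mk n kk : Set (ℕ → S)) = A1 ∪ ((Mk n kk) ∩ {z | EvP z}) := by
    ext v
    simp only [hA1, Mk, Set.mem_union, Set.mem_inter_iff, Set.mem_setOf_eq, Set.mem_iUnion,
      Set.mem_iInter, Set.mem_preimage, Set.mem_compl_iff]
    constructor
    · intro h
      rcases h with ⟨h1, q, hq, h2, h3⟩ | h | h | h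
      · exact Or.inl ⟨h1, q, hq, h2, fun u hu1 hu2 => h3 u hu1 hu2⟩
      · exact Or.inr ⟨Or.inr (Or.inl h), h.1⟩
      · exact Or.inr ⟨Or.inr (Or.inr (Or.inl h)), h.1⟩
      · exact Or.inr ⟨Or.inr (Or.inr (Or.inr h)), h.1⟩
    · intro h
      rcases h with ⟨h1, q, hq, h2, h3⟩ | ⟨h, _⟩
      · exact Or.inl ⟨h1, q, hq, h2, fun u hu1 hu2 => h3 u hu1 hu2⟩
      · exact h
  rw [hsplit]
  refine hA1meas.union ?_
  have hcnt : ((Mk n kk : Set (ℕ → S)) ∩ {z | EvP z}).Countable :=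
    Set.Countable.mono Set.inter_subset_right evp_countable
  exact hcnt.measurableSet

lemma gg_eq_iff {n kk : ℕ} (hn : 1 ≤ n) (hk : n.factorial + n ≤ kk) (z : ℕ → S) (u : ℕ) :
    gg n kk z = u ↔ (shift^[u] z ∈ Mk n kk ∧ ∀ v, v < u → shift^[v] z ∉ Mk n kk) := by
  constructor
  · rintro rfl
    exact ⟨gg_spec hn hk z, fun v hv => gg_min hv⟩
  · rintro ⟨h1, h2⟩
    have hle : gg n kk z ≤ u := Nat.sInf_le h1
    rcases Nat.lt_or_ge (gg n kk z) u with hlt | hge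
    · exact absurd (gg_spec hn hk z) (h2 _ hlt)
    · omega

lemma meas_gg_eq {n kk : ℕ} (hn : 1 ≤ n) (hk : n.factorial + n ≤ kk) (u : ℕ) :
    MeasurableSet {z : ℕ → S | gg n kk z = u} := by
  have h : {z : ℕ → S | gg n kk z = u} =
      ((shift^[u]) ⁻¹' (Mk n kk)) ∩ ⋂ (v : ℕ), ⋂ (_ : v < u), ((shift^[v]) ⁻¹' (Mk n kk))ᶜ := by
    ext z
    simp only [Set.mem_setOf_eq, Set.mem_inter_iff, Set.mem_preimage, Set.mem_iInter,
      Set.mem_compl_iff]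
    rw [gg_eq_iff hn hk]
  rw [h]
  exact ((meas_shift _) (meas_mk n kk)).inter (MeasurableSet.iInter fun v =>
    MeasurableSet.iInter fun _ => ((meas_shift _) (meas_mk n kk)).compl)

end Meas

section Walks

open SimpleGraph

lemma walk_shifts {x y : ℕ → S} (w : (shiftGraph S).Walk x y) :
    ∃ a b, a + b ≤ w.length ∧ shift^[a] x = shift^[b] y := by
  induction w with
  | nil => exact ⟨0, 0, by simp, rfl⟩
  | @cons x' v y' h p ih =>
    obtain ⟨a, b, hab, he⟩ := ih
    rw [shiftGraph, SimpleGraph.fromRel_adj] at h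
    rcases h.2 with h1 | h1
    · -- shift x' = v
      refine ⟨a + 1, b, by simp [Walk.length_cons]; omega, ?_⟩
      rw [Function.iterate_succ_apply, h1]
      exact he
    · -- shift v = x'
      rcases Nat.eq_zero_or_pos a with h0 | h0
      · refine ⟨0, b + 1, by simp [Walk.length_cons]; omega, ?_⟩
        rw [h0] at he
        show x' = shift^[b+1] y'
        rw [Function.iterate_succ_apply', ← he]
        exact h1.symm
      · refine ⟨a - 1, b, by simp [Walk.length_cons]; omega, ?_⟩
        have h2 : shift^[a] v = shift^[a - 1] x' := by
          have h3 : shift^[a-1] (shift v) = shift^[a-1] x' := by rw [h1]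
          rw [← Function.iterate_succ_apply] at h3
          rwa [show (a - 1).succ = a by omega] at h3
        rw [← h2]
        exact he
  
lemma walk_to_shift (t : ℕ) (z : ℕ → S) :
    ∃ w : (shiftGraph S).Walk z (shift^[t] z), w.length ≤ t := by
  induction t with
  | zero => exact ⟨Walk.nil, by simp⟩
  | succ t ih =>
    obtain ⟨w, hw⟩ := ih
    by_cases h : shift (shift^[t] z) = shift^[t] z
    · refine ⟨w.copy rfl ?_, ?_⟩
      · rw [Function.iterate_succ_apply', h]
      · rw [Walk.length_copy]
        omega
    · have hadj : (shiftGraph S).Adj (shift^[t] z) (shift^[t+1] z) := by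
        rw [shiftGraph, SimpleGraph.fromRel_adj]
        constructor
        · rw [Function.iterate_succ_apply']
          exact fun hh => h hh.symm
        · exact Or.inl (Function.iterate_succ_apply' shift t z).symm
      refine ⟨w.concat hadj, ?_⟩
      rw [Walk.length_concat]
      omega

lemma dist_le_of_shifts_eq {x y : ℕ → S} {a b : ℕ} (h : shift^[a] x = shift^[b] y)
    {K : ℝ} (hK : (a : ℝ) + b ≤ K) : shiftDistLe x y K := by
  obtain ⟨w1, hw1⟩ := walk_to_shift a x
  obtain ⟨w2, hw2⟩ := walk_to_shift b y
  refine ⟨w1.append ((w2.reverse).copy h.symm rfl), ?_⟩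
  rw [Walk.length_append, Walk.length_copy, Walk.length_reverse]
  have : (w1.length : ℝ) + w2.length ≤ K := by
    have h1 : (w1.length : ℝ) ≤ a := by exact_mod_cast hw1
    have h2 : (w2.length : ℝ) ≤ b := by exact_mod_cast hw2
    linarith
  exact_mod_cast this

end Walks


theorem stmt14_aux {S : Type*} [Finite S] [MeasurableSpace S]
    [DiscreteMeasurableSpace S] (r : ℝ) (hr : 0 < r) :
    ∃ E : (ℕ → S) → (ℕ → S) → Prop,
      Equivalence E ∧ MeasurableSet {p : (ℕ → S) × (ℕ → S) | E p.1 p.2} ∧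
      (∃ K : ℝ, ∀ x y, E x y → shiftDistLe x y K) ∧
      ∀ x : ℕ → S, ∃ a b : ℕ → S, ∀ y : ℕ → S,
        shiftDistLe x y r → E y a ∨ E y b := by
  classical
  set R := ⌈r⌉₊ with hRdef
  set n := 2 * R + 1 with hndef
  have hn : 1 ≤ n := by omega
  set k := n.factorial + n with hkdef
  have hk : n.factorial + n ≤ k := le_refl _
  set Hf : (ℕ → S) → ℕ := fun u => gg n k (shift^[R] u) + R with hHf
  set fF : (ℕ → S) → (ℕ → S) := fun u => shift^[Hf u] u with hfF
  refine ⟨fun u v => fF u = fF v, ⟨fun _ => rfl, Eq.symm, Eq.trans⟩, ?_, ?_, ?_⟩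
  · -- measurability
    have hEset : {p : (ℕ → S) × (ℕ → S) | fF p.1 = fF p.2} =
        ⋃ (m₁ : ℕ), ⋃ (m₂ : ℕ),
          (({z : ℕ → S | Hf z = m₁} ×ˢ {z : ℕ → S | Hf z = m₂}) ∩
            ⋂ (i : ℕ), {p : (ℕ → S) × (ℕ → S) | p.1 (i + m₁) = p.2 (i + m₂)}) := by
      ext ⟨u, w⟩
      simp only [Set.mem_setOf_eq, Set.mem_iUnion, Set.mem_inter_iff, Set.mem_prod,
        Set.mem_iInter]
      constructor
      · intro h
        refine ⟨Hf u, Hf w, ⟨rfl, rfl⟩, fun i => ?_⟩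
        have := congrFun h i
        simp only [hfF] at this
        rwa [itco, itco] at this
      · rintro ⟨m₁, m₂, ⟨h1, h2⟩, hco⟩
        show shift^[Hf u] u = shift^[Hf w] w
        funext i
        rw [itco, itco, h1, h2]
        exact hco i
    rw [show {p : (ℕ → S) × (ℕ → S) | fF p.1 = fF p.2} =
        {p : (ℕ → S) × (ℕ → S) | fF p.1 = fF p.2} from rfl, hEset]
    refine MeasurableSet.iUnion fun m₁ => MeasurableSet.iUnion fun m₂ => ?_
    have hHfm : ∀ m : ℕ, MeasurableSet {z : ℕ → S | Hf z = m} := by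
      intro m
      by_cases hm : R ≤ m
      · have hset : {z : ℕ → S | Hf z = m} = (shift^[R]) ⁻¹' {w | gg n k w = m - R} := by
          ext z
          simp only [Set.mem_setOf_eq, Set.mem_preimage, hHf]
          omega
        rw [hset]
        exact meas_shift R (meas_gg_eq hn hk (m - R))
      · have hset : {z : ℕ → S | Hf z = m} = ∅ := by
          ext z
          simp only [Set.mem_setOf_eq, Set.mem_empty_iff_false, iff_false, hHf]
          omega
        rw [hset]
        exact MeasurableSet.empty
    refine ((hHfm m₁).prod (hHfm m₂)).inter ?_
    refine MeasurableSet.iInter fun i => ?_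
    have hset : {p : (ℕ → S) × (ℕ → S) | p.1 (i + m₁) = p.2 (i + m₂)} =
        (fun p : (ℕ → S) × (ℕ → S) => (p.1 (i + m₁), p.2 (i + m₂))) ⁻¹'
          {q : S × S | q.1 = q.2} := rfl
    rw [hset]
    have hmeasf : Measurable (fun p : (ℕ → S) × (ℕ → S) => (p.1 (i + m₁), p.2 (i + m₂))) :=
      ((measurable_pi_apply _).comp measurable_fst).prodMk
        ((measurable_pi_apply _).comp measurable_snd)
    exact hmeasf ((Set.to_countable _).measurableSet)
  · -- uniform boundedness
    refine ⟨((2 * (CC S n k + R) : ℕ) : ℝ), fun x y hxy => ?_⟩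
    have h1 : Hf x ≤ CC S n k + R := by
      have := gg_le (S := S) hn hk (shift^[R] x)
      simp only [hHf]
      omega
    have h2 : Hf y ≤ CC S n k + R := by
      have := gg_le (S := S) hn hk (shift^[R] y)
      simp only [hHf]
      omega
    refine dist_le_of_shifts_eq hxy ?_
    have h3 : Hf x + Hf y ≤ 2 * (CC S n k + R) := by omega
    exact_mod_cast Nat.cast_le.mpr h3
  · -- every ball of radius r meets at most two classes
    intro x
    have key : ∀ y, shiftDistLe x y r → ∃ t, t ≤ 2*R ∧ fF y = shift^[vf n k x t] x := by
      rintro y ⟨w, hwlen⟩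
      have hlen : w.length ≤ R := by
        have h1 : (w.length : ℝ) ≤ (R : ℝ) := le_trans hwlen (Nat.le_ceil r)
        exact_mod_cast h1
      obtain ⟨a, b, hab, he⟩ := walk_shifts w
      have ha : a ≤ R := by omega
      have hb : b ≤ R := by omega
      refine ⟨a + (R - b), by omega, ?_⟩
      have h2 : shift^[R] y = shift^[a + (R - b)] x := by
        have h3 : shift^[R - b] (shift^[b] y) = shift^[R - b] (shift^[a] x) := by rw [he]
        rw [← itadd, ← itadd] at h3
        rw [show R = R - b + b by omega]
        rw [h3]
        congr 1
        omega
      show shift^[Hf y] y = shift^[vf n k x (a + (R - b))] x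
      have h4 : Hf y = gg n k (shift^[a + (R - b)] x) + R := by
        simp only [hHf]
        rw [h2]
      rw [h4]
      set G := gg n k (shift^[a + (R - b)] x) with hG
      have h5 : shift^[G + R] y = shift^[G + (R - b)] (shift^[b] y) := by
        rw [← itadd]
        congr 1
        omega
      rw [h5, ← he, ← itadd]
      show shift^[G + (R - b) + a] x = shift^[vf n k x (a + (R - b))] x
      congr 1
      simp only [vf, ← hG]
      omega
    by_cases hall : ∀ y, shiftDistLe x y r → fF y = fF x
    · exact ⟨x, x, fun y hy => Or.inl (hall y hy)⟩
    · push_neg at hall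
      obtain ⟨y₀, hy₀, hne₀⟩ := hall
      refine ⟨x, y₀, fun y hy => ?_⟩
      by_contra hcon
      push_neg at hcon
      obtain ⟨hcon1, hcon2⟩ := hcon
      have hxx : shiftDistLe x x r := ⟨SimpleGraph.Walk.nil, by simpa using le_of_lt hr⟩
      obtain ⟨t0, ht0, he0⟩ := key x hxx
      obtain ⟨t1, ht1, he1⟩ := key y₀ hy₀
      obtain ⟨t2, ht2, he2⟩ := key y hy
      have H : ∀ s1 s2 s3 : ℕ, s1 ≤ s2 → s2 ≤ s3 → s3 ≤ 2*R →
          shift^[vf n k x s1] x ≠ shift^[vf n k x s2] x →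
          shift^[vf n k x s2] x ≠ shift^[vf n k x s3] x → False := by
        intro s1 s2 s3 h12 h23 h3 d12 d23
        exact main_count hn hk x h12 h23 (by omega) d12 d23
      have D01 : shift^[vf n k x t0] x ≠ shift^[vf n k x t1] x := by
        rw [← he0, ← he1]
        exact fun h => hne₀ (h.symm)
      have D02 : shift^[vf n k x t0] x ≠ shift^[vf n k x t2] x := by
        rw [← he0, ← he2]
        exact fun h => hcon1 (h.symm)
      have D12 : shift^[vf n k x t1] x ≠ shift^[vf n k x t2] x := by
        rw [← he1, ← he2]
        exact fun h => hcon2 (h.symm)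
      rcases le_total t0 t1 with h01 | h01
      · rcases le_total t1 t2 with h12 | h12
        · exact H t0 t1 t2 h01 h12 ht2 D01 D12
        · rcases le_total t0 t2 with h02 | h02
          · exact H t0 t2 t1 h02 h12 ht1 D02 D12.symm
          · exact H t2 t0 t1 h02 h01 ht1 D02.symm D01
      · rcases le_total t0 t2 with h02 | h02
        · exact H t1 t0 t2 h01 h02 ht2 D01.symm D02
        · rcases le_total t1 t2 with h12' | h12'
          · exact H t1 t2 t0 h12' h02 ht0 D12 D02.symm
          · exact H t2 t1 t0 h12' h01 ht0 D12.symm D01.symm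

end BAP


open BA in
/-- `(S^ℕ, ρ_s)` has Borel asymptotic dimension at most 1: for
every `r > 0` there is a uniformly bounded Borel equivalence relation `E` such
that every `ρ_s`-ball of radius `r` meets at most `2` classes of `E`. -/
theorem stmt14 {S : Type*} [Finite S] [MeasurableSpace S]
    [DiscreteMeasurableSpace S] (r : ℝ) (hr : 0 < r) :
    ∃ E : (ℕ → S) → (ℕ → S) → Prop,
      Equivalence E ∧ MeasurableSet {p : (ℕ → S) × (ℕ → S) | E p.1 p.2} ∧
      (∃ K : ℝ, ∀ x y, E x y → shiftDistLe x y K) ∧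
      ∀ x : ℕ → S, ∃ a b : ℕ → S, ∀ y : ℕ → S,
        shiftDistLe x y r → E y a ∨ E y b :=
  BAP.stmt14_aux r hr
end

section
/- Let G be a hyperbolic group with finite symmetric generating set S, let η ∈ ∂G, let Γ ∈ CGR(g,η) be the unique geodesic ray from g ∈ G to η whose type is lexicographically minimal among types of rays in CGR(g,η). Then for all n_0 < n_1, the segment (Γ(n_0), …, Γ(n_1)) is the unique geodesic path from Γ(n_0) to Γ(n_1) whose type is lexicographically minimal among types of geodesic paths from Γ(n_0) to Γ(n_1). -/
section Helpers

open SimpleGraph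

variable {V : Type*}

private lemma chain_reach' {G : SimpleGraph V} {x : ℕ → V} (h : ∀ n, G.Adj (x n) (x (n + 1))) :
    ∀ m n, G.Reachable (x m) (x n) := by
  have key : ∀ k m, G.Reachable (x m) (x (m + k)) := by
    intro k
    induction k with
    | zero => exact fun m => Reachable.refl _
    | succ k ih => exact fun m => (ih m).trans (h (m + k)).reachable
  intro m n
  rcases le_total m n with h' | h'
  · obtain ⟨k, rfl⟩ := Nat.exists_eq_add_of_le h'; exact key k m
  · obtain ⟨k, rfl⟩ := Nat.exists_eq_add_of_le h'; exact (key k n).symm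

private lemma seg_reach' {G : SimpleGraph V} {p : ℕ → V} {k : ℕ}
    (h : ∀ i < k, G.Adj (p i) (p (i + 1))) : ∀ i ≤ k, G.Reachable (p 0) (p i) := by
  intro i
  induction i with
  | zero => exact fun _ => Reachable.refl _
  | succ i ih => exact fun hi => (ih (by omega)).trans (h i (by omega)).reachable

private lemma dist_tri' {G : SimpleGraph V} {u v w : V} (h1 : G.Reachable u v)
    (h2 : G.Reachable v w) : G.dist u w ≤ G.dist u v + G.dist v w := by
  obtain ⟨p, hp⟩ := h1.exists_walk_length_eq_dist
  obtain ⟨q, hq⟩ := h2.exists_walk_length_eq_dist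
  rw [← hp, ← hq, ← Walk.length_append]
  exact dist_le _

end Helpers

open BA in
/-- If `Δ` is the ray in `CGR(g, η)` of lexicographically minimal
type, then for `n0 < n1` the segment `(Δ n0, …, Δ n1)` is the unique geodesic
path from `Δ n0` to `Δ n1` of lexicographically minimal type. -/
theorem stmt17 {G : Type*} [Group G] [LinearOrder G] (S : Finset G)
    (hsym : ∀ s ∈ S, s⁻¹ ∈ S) (hgen : Subgroup.closure (S : Set G) = ⊤)
    (δ : ℝ) (hδ : 0 < δ) (hhyp : DeltaThin (cayley (S : Set G)) δ)
    (g : G) (Δ : ℕ → G) (hΔ : GeoRay (cayley (S : Set G)) Δ) (h0 : Δ 0 = g)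
    (hmin : ∀ Δ' : ℕ → G, GeoRay (cayley (S : Set G)) Δ' → Δ' 0 = g →
      Asymp (cayley (S : Set G)) Δ' Δ → lexLe (typ Δ) (typ Δ'))
    (n0 n1 : ℕ) (h01 : n0 < n1) (p : ℕ → G)
    (hp : GeoSeg (cayley (S : Set G)) p (n1 - n0))
    (hp0 : p 0 = Δ n0) (hp1 : p (n1 - n0) = Δ n1) :
    lexLeUpTo (n1 - n0) (typ fun i => Δ (n0 + i)) (typ p) ∧
    ((∀ i < n1 - n0, typ p i = typ (fun i => Δ (n0 + i)) i) →
      ∀ i ≤ n1 - n0, p i = Δ (n0 + i)) := by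
  classical
  set C := cayley (S : Set G) with hC
  -- Part 2: uniqueness given equal types
  have part2 : (∀ i < n1 - n0, typ p i = typ (fun i => Δ (n0 + i)) i) →
      ∀ i ≤ n1 - n0, p i = Δ (n0 + i) := by
    intro h i
    induction i with
    | zero => intro _; simpa using hp0
    | succ i ih =>
      intro hi
      have h1 : p (i + 1) = p i * typ p i := by simp [typ]
      rw [h1, h i (by omega), ih (by omega)]
      simp [typ]
  refine ⟨?_, part2⟩
  -- Define the substituted ray
  set Δ' : ℕ → G := fun n => if n0 ≤ n ∧ n ≤ n1 then p (n - n0) else Δ n with hΔ'def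
  have hA : ∀ n ≤ n0, Δ' n = Δ n := by
    intro n hn
    rcases Nat.lt_or_ge n n0 with hlt | hge
    · have hc : ¬ (n0 ≤ n ∧ n ≤ n1) := by omega
      exact if_neg hc
    · have he : n = n0 := by omega
      have hc : n0 ≤ n ∧ n ≤ n1 := by omega
      show (if n0 ≤ n ∧ n ≤ n1 then p (n - n0) else Δ n) = Δ n
      rw [if_pos hc, he, Nat.sub_self, hp0]
  have hB : ∀ n, n0 ≤ n → n ≤ n1 → Δ' n = p (n - n0) := by
    intro n h1 h2
    exact if_pos ⟨h1, h2⟩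
  have hCc : ∀ n, n1 ≤ n → Δ' n = Δ n := by
    intro n hn
    rcases Nat.lt_or_ge n1 n with hlt | hge
    · have hc : ¬ (n0 ≤ n ∧ n ≤ n1) := by omega
      exact if_neg hc
    · have he : n = n1 := by omega
      have hc : n0 ≤ n ∧ n ≤ n1 := by omega
      show (if n0 ≤ n ∧ n ≤ n1 then p (n - n0) else Δ n) = Δ n
      rw [if_pos hc, he, hp1]
  have hadj : ∀ n, C.Adj (Δ' n) (Δ' (n + 1)) := by
    intro n
    rcases lt_or_ge n n0 with h | h
    · rw [hA n (by omega), hA (n + 1) (by omega)]; exact hΔ.1 n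
    rcases lt_or_ge n n1 with h' | h'
    · rw [hB n h (by omega), hB (n + 1) (by omega) (by omega)]
      have e : n + 1 - n0 = n - n0 + 1 := by omega
      rw [e]
      exact hp.1 (n - n0) (by omega)
    · rw [hCc n h', hCc (n + 1) (by omega)]; exact hΔ.1 n
  have reachΔ : ∀ m n, C.Reachable (Δ m) (Δ n) := chain_reach' hΔ.1
  have reachP : ∀ i ≤ n1 - n0, C.Reachable (Δ n0) (p i) := by
    intro i hi
    rw [← hp0]
    exact seg_reach' hp.1 i hi
  have distΔ : ∀ m n, m ≤ n → C.dist (Δ m) (Δ n) = n - m := by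
    intro m n h
    rw [hΔ.2 m n, Nat.dist_eq_sub_of_le h]
  have distP : ∀ i j, i ≤ j → j ≤ n1 - n0 → C.dist (p i) (p j) = j - i := by
    intro i j h1 h2
    rw [hp.2 i (by omega) j h2, Nat.dist_eq_sub_of_le h1]
  have hdist : ∀ m n, m ≤ n → C.dist (Δ' m) (Δ' n) = n - m := by
    intro m n hmn
    rcases le_or_gt n n0 with h | h
    · rw [hA m (by omega), hA n h]; exact distΔ m n hmn
    rcases le_or_gt n n1 with h' | h'
    · -- n0 < n ≤ n1
      rcases le_or_gt m n0 with hm | hm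
      · -- m ≤ n0 < n ≤ n1
        rw [hA m hm, hB n (by omega) h']
        have hr1 : C.Reachable (Δ m) (Δ n0) := reachΔ m n0
        have hr2 : C.Reachable (Δ n0) (p (n - n0)) := reachP (n - n0) (by omega)
        have hup := dist_tri' hr1 hr2
        have hlow := dist_tri' (hr1.trans hr2)
          ((hr2.symm.trans hr1.symm).trans (reachΔ m n1))
        rw [distΔ m n0 hm] at hup
        have e1 : C.dist (Δ n0) (p (n - n0)) = n - n0 := by
          rw [← hp0, distP 0 (n - n0) (by omega) (by omega)]
          omega
        rw [e1] at hup
        have e2 : C.dist (p (n - n0)) (Δ n1) = n1 - n := by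
          rw [← hp1, distP (n - n0) (n1 - n0) (by omega) (by omega)]
          omega
        rw [e2, distΔ m n1 (by omega)] at hlow
        omega
      · -- n0 < m ≤ n ≤ n1
        rw [hB m hm.le (by omega), hB n (by omega) h']
        rw [distP (m - n0) (n - n0) (by omega) (by omega)]
        omega
    · -- n1 < n
      rcases le_or_gt m n0 with hm | hm
      · rw [hA m hm, hCc n (by omega)]; exact distΔ m n hmn
      rcases le_or_gt m n1 with hm' | hm'
      · -- n0 < m ≤ n1 < n
        rw [hB m hm.le hm', hCc n (by omega)]
        have hr1 : C.Reachable (p (m - n0)) (Δ n1) := by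
          rw [← hp1]
          exact ((reachP (m - n0) (by omega)).symm.trans
            (reachP (n1 - n0) (by omega)))
        have hr2 : C.Reachable (Δ n1) (Δ n) := reachΔ n1 n
        have hup := dist_tri' hr1 hr2
        have hlow := dist_tri' (reachP (m - n0) (by omega)) (hr1.trans hr2)
        have e1 : C.dist (p (m - n0)) (Δ n1) = n1 - m := by
          rw [← hp1, distP (m - n0) (n1 - n0) (by omega) (by omega)]
          omega
        rw [e1, distΔ n1 n (by omega)] at hup
        have e2 : C.dist (Δ n0) (p (m - n0)) = m - n0 := by
          rw [← hp0, distP 0 (m - n0) (by omega) (by omega)]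
          omega
        rw [e2, distΔ n0 n (by omega)] at hlow
        omega
      · rw [hCc m (by omega), hCc n (by omega)]; exact distΔ m n hmn
  have hgeo : GeoRay C Δ' := by
    refine ⟨hadj, fun m n => ?_⟩
    rcases le_total m n with h | h
    · rw [hdist m n h, Nat.dist_eq_sub_of_le h]
    · rw [SimpleGraph.dist_comm, hdist n m h, Nat.dist_comm, Nat.dist_eq_sub_of_le h]
  have hstart : Δ' 0 = g := by rw [hA 0 (by omega), h0]
  have hasymp : Asymp C Δ' Δ := by
    have key : ∀ n, ∃ w : C.Walk (Δ' n) (Δ n), w.length ≤ 2 * n1 := by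
      intro n
      rcases le_or_gt n n0 with h | h
      · rw [hA n h]; exact ⟨SimpleGraph.Walk.nil, by simp⟩
      rcases le_or_gt n1 n with h' | h'
      · rw [hCc n h']; exact ⟨SimpleGraph.Walk.nil, by simp⟩
      · rw [hB n h.le h'.le]
        have hr : C.Reachable (p (n - n0)) (Δ n) :=
          ((reachP (n - n0) (by omega)).symm).trans (reachΔ n0 n)
        obtain ⟨w, hw⟩ := hr.exists_walk_length_eq_dist
        refine ⟨w, ?_⟩
        rw [hw]
        have t := dist_tri' ((reachP (n - n0) (by omega)).symm) (reachΔ n0 n)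
        have e1 : C.dist (p (n - n0)) (Δ n0) = n - n0 := by
          rw [← hp0, SimpleGraph.dist_comm, distP 0 (n - n0) (by omega) (by omega)]
          omega
        rw [e1, distΔ n0 n (by omega)] at t
        omega
    exact ⟨2 * n1, fun n => ⟨n, key n⟩, fun m => ⟨m, key m⟩⟩
  have tA : ∀ m, m < n0 → typ Δ' m = typ Δ m := by
    intro m hm
    simp only [typ, hA m (by omega), hA (m + 1) (by omega)]
  have tB : ∀ m, n0 ≤ m → m < n1 → typ Δ' m = typ p (m - n0) := by
    intro m h1 h2
    have e : m + 1 - n0 = m - n0 + 1 := by omega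
    simp only [typ, hB m h1 (by omega), hB (m + 1) (by omega) (by omega), e]
  have tC : ∀ m, n1 ≤ m → typ Δ' m = typ Δ m := by
    intro m hm
    simp only [typ, hCc m hm, hCc (m + 1) (by omega)]
  have tSeg : ∀ i, typ (fun i => Δ (n0 + i)) i = typ Δ (n0 + i) := fun i => rfl
  rcases hmin Δ' hgeo hstart hasymp with heq | ⟨n, hpre, hlt⟩
  · left
    intro i hi
    have h1 := congrFun heq (n0 + i)
    rw [tB (n0 + i) (by omega) (by omega)] at h1
    have e : n0 + i - n0 = i := by omega
    rw [e] at h1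
    rw [tSeg i, h1]
  · rcases lt_or_ge n n0 with h | h
    · rw [tA n h] at hlt; exact absurd hlt (lt_irrefl _)
    rcases le_or_gt n1 n with h' | h'
    · rw [tC n h'] at hlt; exact absurd hlt (lt_irrefl _)
    · right
      refine ⟨n - n0, by omega, fun m hm => ?_, ?_⟩
      · have h1 := hpre (n0 + m) (by omega)
        rw [tB (n0 + m) (by omega) (by omega)] at h1
        have e : n0 + m - n0 = m := by omega
        rw [e] at h1
        rw [tSeg m, h1]
      · have e : n0 + (n - n0) = n := by omega
        rw [tSeg (n - n0), e]
        rw [tB n h h'] at hlt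
        exact hlt
end
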